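/- arXiv:2002.00925 — 2 statements merged into one kernel-verified Lean document; each statement's English description precedes it below -/
import Mathlib

section
/- Let (X_v)_{v∈V} be a finite centered Gaussian field and (g_v)_{v∈V} independent random variables, independent of X, with P(g_v ≥ 1 + y) ≤ e^{−y²} for all y ≥ 0. Suppose there exist constants c̃, c > 0 such that for every finite subset Γ ⊆ V and every real s, P(max_{v∈Γ} X_v ≥ m + s) ≤ c̃ e^{−cs} |Γ|/|V|. Then there is a constant C > 0 such that for all ε ∈ (0,1) and all x ≥ −√ε, P(max_{v∈V}(X_v + ε g_v) ≥ m + x) ≤ P(max_{v∈V} X_v ≥ m + x − √ε) + c̃ e^{−cx} C e^{−1/(Cε)}. -/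
set_option maxHeartbeats 1000000


open MeasureTheory ProbabilityTheory

/-- A finite family `X` of random variables is a centered Gaussian field if every
linear combination is a centered Gaussian random variable. -/
def IsCenteredGaussianField {Ω : Type*} [MeasurableSpace Ω] (P : Measure Ω)
    {T : Type*} [Fintype T] (X : T → Ω → ℝ) : Prop :=
  ∀ c : T → ℝ, ∃ v : NNReal,
    P.map (fun ω => ∑ i, c i * X i ω) = gaussianReal 0 v

lemma stmt9_expkey (c x ε : ℝ) (hc : 0 < c) (hε0 : 0 < ε) (hε1 : ε < 1) (i : ℕ) :
    Real.exp (-c * (x - 2 ^ (i+1) * Real.sqrt ε)) * Real.exp (-((2:ℝ) ^ i / Real.sqrt ε - 1) ^ 2)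
      ≤ Real.exp (-c * x) * Real.exp (1 + 8 * c ^ 2) * Real.exp (-1 / (4 * ε))
        * Real.exp (-(1/8:ℝ)) ^ (i+1) := by
  have hs0 : 0 < Real.sqrt ε := Real.sqrt_pos.2 hε0
  have hs1 : Real.sqrt ε ≤ 1 := Real.sqrt_le_one.2 hε1.le
  have hs2 : Real.sqrt ε * Real.sqrt ε = ε := Real.mul_self_sqrt hε0.le
  set s : ℝ := Real.sqrt ε with hs_def
  rw [← Real.exp_nat_mul, ← Real.exp_add, ← Real.exp_add, ← Real.exp_add, ← Real.exp_add]
  apply Real.exp_le_exp.2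
  set p : ℝ := (2:ℝ) ^ i with hp_def
  have hp1 : (1:ℝ) ≤ p := one_le_pow₀ one_le_two
  have hp0 : (0:ℝ) < p := lt_of_lt_of_le one_pos hp1
  have h2i : (i:ℝ) + 1 ≤ p := by
    rw [hp_def]
    have h := Nat.lt_two_pow_self (n := i)
    have h' : (i:ℝ) + 1 ≤ ((2^i : ℕ) : ℝ) := by exact_mod_cast h
    simpa using h'
  set u : ℝ := s⁻¹ with hu_def
  have hu0 : (0:ℝ) < u := inv_pos.2 hs0
  have hus : u * s = 1 := inv_mul_cancel₀ hs0.ne'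
  have hu1 : (1:ℝ) ≤ u := by nlinarith [hu0, hus, hs1, hs0]
  have e1 : (2:ℝ) ^ (i+1) * s = 2 * p * s := by rw [pow_succ]; ring
  have e2 : (2:ℝ) ^ i / s = p * u := by rw [div_eq_mul_inv]
  have e3 : -1 / (4 * ε) = -(u ^ 2) / 4 := by
    have hε' : ε = s * s := hs2.symm
    rw [hε', hu_def]
    field_simp
  have hp2 : (0:ℝ) ≤ p ^ 2 - 1 := by nlinarith [hp1]
  have hu2 : (0:ℝ) ≤ u ^ 2 - 1 := by nlinarith [hu1]
  have hA1 : 2 * c * p * s ≤ 2 * c * p := by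
    have h := mul_nonneg (mul_nonneg hc.le hp0.le) (by linarith : (0:ℝ) ≤ 1 - s)
    nlinarith [h]
  have hA2 : 2 * c * p ≤ p ^ 2 / 8 + 8 * c ^ 2 := by nlinarith [sq_nonneg (p - 8 * c)]
  have hA3 : (p * u) ^ 2 / 2 - 1 ≤ (p * u - 1) ^ 2 := by nlinarith [sq_nonneg (p * u - 2)]
  have hA4 : p ^ 2 / 4 + u ^ 2 / 4 ≤ (p * u) ^ 2 / 2 := by
    nlinarith [mul_nonneg hp2 hu2, hp2, hu2]
  have hA5 : (i:ℝ) + 1 ≤ p ^ 2 := by nlinarith [h2i, hp1]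
  have key : 2 * c * p * s - (p * u - 1) ^ 2
      ≤ 1 + 8 * c ^ 2 - u ^ 2 / 4 - ((i:ℝ) + 1) / 8 := by linarith
  rw [e1, e2, e3]
  push_cast
  linarith [key]

/-- Perturbation lemma: adding small independent sub-Gaussian perturbations `ε g_v` to a
Gaussian field changes the upper tail of the maximum only by a shift `√ε` plus an error
exponentially small in `1/ε`. -/
theorem stmt9 {Ω : Type*} [MeasurableSpace Ω] (P : Measure Ω) [IsProbabilityMeasure P]
    {V : Type*} [Fintype V] [Nonempty V]
    (X g : V → Ω → ℝ) (m : ℝ)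
    (hX : IsCenteredGaussianField P X)
    (hgindep : iIndepFun g P)
    (hindep : IndepFun (fun ω => fun v => X v ω) (fun ω => fun v => g v ω) P)
    (hgtail : ∀ v, ∀ y : ℝ, 0 ≤ y → P {ω | 1 + y ≤ g v ω} ≤ ENNReal.ofReal (Real.exp (-y ^ 2)))
    (ctil c : ℝ) (hctil : 0 < ctil) (hc : 0 < c)
    (hmax : ∀ (Γ : Finset V) (s : ℝ),
      P {ω | ∃ v ∈ Γ, m + s ≤ X v ω}
        ≤ ENNReal.ofReal (ctil * Real.exp (-c * s) * Γ.card / Fintype.card V)) :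
    ∃ C : ℝ, 0 < C ∧ ∀ ε : ℝ, ε ∈ Set.Ioo (0:ℝ) 1 → ∀ x : ℝ, -Real.sqrt ε ≤ x →
      P {ω | ∃ v, m + x ≤ X v ω + ε * g v ω}
        ≤ P {ω | ∃ v, m + x - Real.sqrt ε ≤ X v ω}
          + ENNReal.ofReal (ctil * Real.exp (-c * x) * C * Real.exp (-1 / (C * ε))) := by
  classical
  set r : ℝ := Real.exp (-(1/8)) with hr_def
  have hr0 : 0 < r := Real.exp_pos _
  have hr1 : r < 1 := Real.exp_lt_one_iff.2 (by norm_num)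
  set S : ℝ := r * (1 - r)⁻¹ with hS_def
  have hS0 : 0 < S := mul_pos hr0 (inv_pos.2 (by linarith))
  set K : ℝ := Real.exp (1 + 8 * c ^ 2) * S with hK_def
  have hK0 : 0 < K := mul_pos (Real.exp_pos _) hS0
  refine ⟨4 + K, by linarith, ?_⟩
  rintro ε ⟨hε0, hε1⟩ x hx
  set N := Fintype.card V with hN_def
  have hN0 : 0 < N := Fintype.card_pos
  have hN0' : (0:ℝ) < N := by exact_mod_cast hN0
  set s := Real.sqrt ε with hs_def
  have hs0 : 0 < s := Real.sqrt_pos.2 hε0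
  have hs1 : s ≤ 1 := Real.sqrt_le_one.2 hε1.le
  have hs2 : s * s = ε := Real.mul_self_sqrt hε0.le
  -- the events
  set A : V → ℕ → Set Ω := fun v i => {ω | m + (x - 2 ^ (i+1) * s) ≤ X v ω} with hA_def
  set B : V → ℕ → Set Ω := fun v i => {ω | 1 + ((2:ℝ) ^ i / s - 1) ≤ g v ω} with hB_def
  -- covering
  have hcover : {ω | ∃ v, m + x ≤ X v ω + ε * g v ω}
      ⊆ {ω | ∃ v, m + x - Real.sqrt ε ≤ X v ω} ∪ ⋃ (v : V), ⋃ (i : ℕ), A v i ∩ B v i := by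
    rintro ω ⟨v, hv⟩
    by_cases h : ε * g v ω ≤ s
    · exact Or.inl ⟨v, by linarith⟩
    · push_neg at h
      set t := ε * g v ω / s with ht_def
      have ht1 : 1 < t := (one_lt_div hs0).2 h
      have hlog : 0 ≤ Real.logb 2 t := Real.logb_nonneg one_lt_two ht1.le
      set i := ⌊Real.logb 2 t⌋₊ with hi_def
      have ht0 : (0:ℝ) < t := lt_trans one_pos ht1
      have h1 : (2:ℝ) ^ i ≤ t := by
        have h' : (2:ℝ) ^ ((i:ℝ)) ≤ 2 ^ Real.logb 2 t :=
          Real.rpow_le_rpow_of_exponent_le one_le_two (Nat.floor_le hlog)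
        rwa [Real.rpow_natCast, Real.rpow_logb two_pos (by norm_num) ht0] at h'
      have h2 : t < (2:ℝ) ^ (i+1) := by
        have h' : (2:ℝ) ^ Real.logb 2 t < 2 ^ (((i+1 : ℕ)) : ℝ) := by
          apply Real.rpow_lt_rpow_of_exponent_lt one_lt_two
          push_cast
          exact Nat.lt_floor_add_one _
        rwa [Real.rpow_natCast, Real.rpow_logb two_pos (by norm_num) ht0] at h'
      right
      refine Set.mem_iUnion.2 ⟨v, Set.mem_iUnion.2 ⟨i, ?_, ?_⟩⟩
      · show m + (x - 2 ^ (i+1) * s) ≤ X v ω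
        have hlt : ε * g v ω < 2 ^ (i+1) * s := (div_lt_iff₀ hs0).1 h2
        linarith
      · show 1 + ((2:ℝ) ^ i / s - 1) ≤ g v ω
        have h1' : (2:ℝ) ^ i * s ≤ ε * g v ω := (le_div_iff₀ hs0).1 h1
        have hgoal : (2:ℝ) ^ i / s ≤ g v ω := by
          rw [div_le_iff₀ hs0]
          nlinarith [h1', hs2, hs0]
        linarith
  -- independence of the coordinates
  have hvind : ∀ v : V, IndepFun (X v) (g v) P := fun v =>
    hindep.comp (measurable_pi_apply v) (measurable_pi_apply v)
  -- per-term bound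
  set E : ℝ := Real.exp (-c * x) * Real.exp (1 + 8 * c ^ 2) * Real.exp (-1 / (4 * ε)) with hE_def
  set M : ℝ := ctil * E * r / N with hM_def
  have hE0 : 0 < E := by positivity
  have hM0 : 0 < M := by positivity
  -- key real exponent inequality
  have hreal : ∀ i : ℕ,
      Real.exp (-c * (x - 2 ^ (i+1) * s)) * Real.exp (-((2:ℝ) ^ i / s - 1) ^ 2)
        ≤ E * r ^ (i+1) := fun i => stmt9_expkey c x ε hc hε0 hε1 i
  -- bound each intersection
  have hterm : ∀ (v : V) (i : ℕ), P (A v i ∩ B v i) ≤ ENNReal.ofReal (M * r ^ i) := by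
    intro v i
    have hAset : A v i = X v ⁻¹' Set.Ici (m + (x - 2 ^ (i+1) * s)) := by
      ext ω; simp [hA_def]
    have hBset : B v i = g v ⁻¹' Set.Ici (1 + ((2:ℝ) ^ i / s - 1)) := by
      ext ω; simp [hB_def]
    have hAB : P (A v i ∩ B v i) = P (A v i) * P (B v i) := by
      rw [hAset, hBset]
      exact (hvind v).measure_inter_preimage_eq_mul
        (Set.Ici (m + (x - 2 ^ (i+1) * s))) (Set.Ici (1 + ((2:ℝ) ^ i / s - 1)))
        measurableSet_Ici measurableSet_Ici
    have hA : P (A v i) ≤ ENNReal.ofReal (ctil * Real.exp (-c * (x - 2 ^ (i+1) * s)) * 1 / N) := by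
      have h := hmax {v} (x - 2 ^ (i+1) * s)
      have hset : {ω | ∃ w ∈ ({v} : Finset V), m + (x - 2 ^ (i+1) * s) ≤ X w ω} = A v i := by
        ext ω; simp [hA_def]
      have hcard : ((({v} : Finset V).card : ℝ)) = 1 := by simp
      rw [hset, hcard] at h
      exact h
    have hynn : (0:ℝ) ≤ (2:ℝ) ^ i / s - 1 := by
      have hp1 : (1:ℝ) ≤ (2:ℝ) ^ i := one_le_pow₀ one_le_two
      have : (1:ℝ) ≤ (2:ℝ) ^ i / s := by
        rw [le_div_iff₀ hs0]; linarith
      linarith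
    have hB : P (B v i) ≤ ENNReal.ofReal (Real.exp (-((2:ℝ) ^ i / s - 1) ^ 2)) :=
      hgtail v _ hynn
    calc P (A v i ∩ B v i) = P (A v i) * P (B v i) := hAB
      _ ≤ ENNReal.ofReal (ctil * Real.exp (-c * (x - 2 ^ (i+1) * s)) * 1 / N)
          * ENNReal.ofReal (Real.exp (-((2:ℝ) ^ i / s - 1) ^ 2)) := mul_le_mul' hA hB
      _ = ENNReal.ofReal ((ctil * Real.exp (-c * (x - 2 ^ (i+1) * s)) * 1 / N)
          * Real.exp (-((2:ℝ) ^ i / s - 1) ^ 2)) := (ENNReal.ofReal_mul (by positivity)).symm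
      _ ≤ ENNReal.ofReal (M * r ^ i) := by
          apply ENNReal.ofReal_le_ofReal
          have hprod := hreal i
          have hEq : M * r ^ i = ctil * (E * r ^ (i+1)) / N := by
            rw [hM_def, pow_succ]; ring
          rw [hEq]
          have : ctil * Real.exp (-c * (x - 2 ^ (i+1) * s)) * 1 / N
              * Real.exp (-((2:ℝ) ^ i / s - 1) ^ 2)
              = ctil * (Real.exp (-c * (x - 2 ^ (i+1) * s))
                * Real.exp (-((2:ℝ) ^ i / s - 1) ^ 2)) / N := by ring
          rw [this]
          gcongr
    -- done
  -- sum over i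
  have hsumM : Summable (fun i : ℕ => M * r ^ i) :=
    (summable_geometric_of_lt_one hr0.le hr1).mul_left M
  have htsumM : ∑' i : ℕ, (M * r ^ i) = M * (1 - r)⁻¹ := by
    rw [tsum_mul_left, tsum_geometric_of_lt_one hr0.le hr1]
  have hv_bound : ∀ v : V, ∑' i : ℕ, P (A v i ∩ B v i) ≤ ENNReal.ofReal (M * (1 - r)⁻¹) := by
    intro v
    calc ∑' i : ℕ, P (A v i ∩ B v i) ≤ ∑' i : ℕ, ENNReal.ofReal (M * r ^ i) :=
          ENNReal.tsum_le_tsum (hterm v)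
      _ = ENNReal.ofReal (∑' i : ℕ, (M * r ^ i)) :=
          (ENNReal.ofReal_tsum_of_nonneg (fun i => by positivity) hsumM).symm
      _ = ENNReal.ofReal (M * (1 - r)⁻¹) := by rw [htsumM]
  -- assemble
  have hNne : (N : ℝ) ≠ 0 := ne_of_gt hN0'
  have hNM : (N : ℝ) * (M * (1 - r)⁻¹) = ctil * Real.exp (-c * x)
      * (Real.exp (1 + 8 * c ^ 2) * S) * Real.exp (-1 / (4 * ε)) := by
    calc (N : ℝ) * (M * (1 - r)⁻¹)
        = ((N : ℝ) / N) * (ctil * E * r * (1 - r)⁻¹) := by rw [hM_def]; ring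
      _ = ctil * E * r * (1 - r)⁻¹ := by rw [div_self hNne, one_mul]
      _ = ctil * Real.exp (-c * x) * (Real.exp (1 + 8 * c ^ 2) * S)
          * Real.exp (-1 / (4 * ε)) := by rw [hE_def, hS_def]; ring
  calc P {ω | ∃ v, m + x ≤ X v ω + ε * g v ω}
      ≤ P ({ω | ∃ v, m + x - Real.sqrt ε ≤ X v ω} ∪ ⋃ (v : V), ⋃ (i : ℕ), A v i ∩ B v i) :=
        measure_mono hcover
    _ ≤ P {ω | ∃ v, m + x - Real.sqrt ε ≤ X v ω}
        + P (⋃ (v : V), ⋃ (i : ℕ), A v i ∩ B v i) := measure_union_le _ _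
    _ ≤ P {ω | ∃ v, m + x - Real.sqrt ε ≤ X v ω}
        + ∑' (v : V), P (⋃ (i : ℕ), A v i ∩ B v i) := by
        gcongr
        exact measure_iUnion_le _
    _ ≤ P {ω | ∃ v, m + x - Real.sqrt ε ≤ X v ω}
        + ∑' (v : V), ∑' (i : ℕ), P (A v i ∩ B v i) := by
        gcongr with v
        exact measure_iUnion_le _
    _ ≤ P {ω | ∃ v, m + x - Real.sqrt ε ≤ X v ω}
        + ∑' (v : V), ENNReal.ofReal (M * (1 - r)⁻¹) :=
        add_le_add_right (ENNReal.tsum_le_tsum hv_bound) _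
    _ = P {ω | ∃ v, m + x - Real.sqrt ε ≤ X v ω}
        + (N : ENNReal) * ENNReal.ofReal (M * (1 - r)⁻¹) := by
        rw [tsum_fintype]
        simp [Finset.sum_const, Finset.card_univ, nsmul_eq_mul, hN_def]
    _ = P {ω | ∃ v, m + x - Real.sqrt ε ≤ X v ω}
        + ENNReal.ofReal ((N : ℝ) * (M * (1 - r)⁻¹)) := by
        rw [← ENNReal.ofReal_natCast N, ← ENNReal.ofReal_mul (by positivity)]
    _ ≤ P {ω | ∃ v, m + x - Real.sqrt ε ≤ X v ω}
        + ENNReal.ofReal (ctil * Real.exp (-c * x) * (4 + K) * Real.exp (-1 / ((4 + K) * ε))) := by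
        refine add_le_add_right ?_ _
        apply ENNReal.ofReal_le_ofReal
        rw [hNM]
        have h1 : Real.exp (1 + 8 * c ^ 2) * S ≤ 4 + K := by rw [hK_def]; linarith
        have h2 : Real.exp (-1 / (4 * ε)) ≤ Real.exp (-1 / ((4 + K) * ε)) := by
          apply Real.exp_le_exp.2
          rw [neg_div, neg_div, neg_le_neg_iff]
          apply one_div_le_one_div_of_le (by positivity)
          have := mul_nonneg hK0.le hε0.le
          nlinarith [this]
        calc ctil * Real.exp (-c * x) * (Real.exp (1 + 8 * c ^ 2) * S) * Real.exp (-1 / (4 * ε))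
            ≤ ctil * Real.exp (-c * x) * (4 + K) * Real.exp (-1 / (4 * ε)) := by
              gcongr
          _ ≤ ctil * Real.exp (-c * x) * (4 + K) * Real.exp (-1 / ((4 + K) * ε)) := by
              gcongr
end

section
/- Let (η_N) be a sequence of point processes on [0,1]² × ℝ such that for every y > 0, sup_N P(η_N([0,1]² × [−y,∞)) > e^{κy}) ≤ C e^{−y(κ−2)} for some κ > 2, C > 0, and such that any distributional limit η satisfies η([0,1]²×[0,∞)) < ∞ a.s. Then any subsequential limit η of (η_N) satisfies: the random measure Y in the Cox representation η = PPP(Y(dx) ⊗ β e^{−2h} dh) has Y([0,1]²) < ∞ almost surely. -/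
open MeasureTheory ProbabilityTheory
open scoped ENNReal

/-- Countable superadditivity of the lower Lebesgue integral (no measurability needed). -/
lemma aux_tsum_lintegral_le {Ω : Type*} [MeasurableSpace Ω] (μ : Measure Ω)
    (g : ℕ → Ω → ℝ≥0∞) : ∑' k, ∫⁻ ω, g k ω ∂μ ≤ ∫⁻ ω, ∑' k, g k ω ∂μ := by
  rw [ENNReal.tsum_eq_iSup_sum]
  refine iSup_le fun F => ?_
  have hfin : ∀ F : Finset ℕ, ∑ k ∈ F, ∫⁻ ω, g k ω ∂μ ≤ ∫⁻ ω, ∑ k ∈ F, g k ω ∂μ := by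
    intro F
    classical
    induction F using Finset.induction with
    | empty => simp
    | @insert a F ha ih =>
        rw [Finset.sum_insert ha]
        calc ∫⁻ ω, g a ω ∂μ + ∑ k ∈ F, ∫⁻ ω, g k ω ∂μ
            ≤ ∫⁻ ω, g a ω ∂μ + ∫⁻ ω, ∑ k ∈ F, g k ω ∂μ := add_le_add_right ih _
          _ ≤ ∫⁻ ω, (g a ω + ∑ k ∈ F, g k ω) ∂μ := le_lintegral_add _ _
          _ = ∫⁻ ω, ∑ k ∈ insert a F, g k ω ∂μ := by
              refine lintegral_congr fun ω => ?_
              rw [Finset.sum_insert ha]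
  refine (hfin F).trans (lintegral_mono fun ω => ?_)
  exact ENNReal.sum_le_tsum F

/-- If `h ≤ 1` and `h` vanishes on `A`, then `∫ h + μ A ≤ 1` for a probability measure. -/
lemma aux_lintegral_add_meas_le {Ω : Type*} [MeasurableSpace Ω] (μ : Measure Ω)
    [IsProbabilityMeasure μ] (h : Ω → ℝ≥0∞) (A : Set Ω)
    (h1 : ∀ ω, h ω ≤ 1) (h0 : ∀ ω ∈ A, h ω = 0) :
    ∫⁻ ω, h ω ∂μ + μ A ≤ 1 := by
  have hint : ∫⁻ ω, h ω ∂μ ≤ 1 - μ A := by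
    rw [← iSup_lintegral_measurable_le_eq_lintegral]
    refine iSup_le fun g => iSup_le fun hg => iSup_le fun hgh => ?_
    set T : Set Ω := g ⁻¹' {0} with hT
    have hTm : MeasurableSet T := hg (measurableSet_singleton 0)
    have hAT : A ⊆ T := by
      intro ω hω
      have : g ω ≤ 0 := (hgh ω).trans_eq (h0 ω hω)
      simpa [hT, Set.mem_preimage] using le_antisymm this zero_le
    have hmono : ∫⁻ ω, g ω ∂μ ≤ ∫⁻ ω, Tᶜ.indicator (fun _ => (1:ℝ≥0∞)) ω ∂μ := by
      refine lintegral_mono fun ω => ?_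
      by_cases hω : ω ∈ T
      · have : g ω = 0 := by simpa [hT, Set.mem_preimage] using hω
        simp [this]
      · rw [Set.indicator_of_mem (Set.mem_compl hω)]
        exact (hgh ω).trans (h1 ω)
    rw [lintegral_indicator hTm.compl, setLIntegral_one] at hmono
    refine hmono.trans ?_
    rw [prob_compl_eq_one_sub hTm]
    exact tsub_le_tsub le_rfl (measure_mono hAT)
  calc ∫⁻ ω, h ω ∂μ + μ A ≤ (1 - μ A) + μ A := add_le_add_left hint _
    _ = 1 := tsub_add_cancel_of_le prob_le_one

/-- Finiteness of the random intensity measure: if a point process `η` on `[0,1]² × ℝ`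
satisfies the uniform exponential level-set bound with exponent `κ > 2` and is a Cox
process with intensity `Y(dx) ⊗ β e^{-2h} dh` (so that the number of points above level
`-y` is conditionally Poisson with mean `(β/2) e^{2y} Y([0,1]²)`), then
`Y([0,1]²) < ∞` almost surely. -/
theorem stmt16 {Ω : Type*} [MeasurableSpace Ω] (P : Measure Ω) [IsProbabilityMeasure P]
    (η : Ω → Measure ((ℝ × ℝ) × ℝ)) (Y : Ω → Measure (ℝ × ℝ))
    (β C κ : ℝ) (hβ : 0 < β) (hC : 0 < C) (hκ : 2 < κ)
    (box : Set (ℝ × ℝ)) (hbox : box = Set.Icc (0:ℝ) 1 ×ˢ Set.Icc (0:ℝ) 1)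
    (hpoint : ∀ ω s, η ω s = ⊤ ∨ ∃ k : ℕ, η ω s = k)
    (hlevel : ∀ y : ℝ, 0 < y →
      P {ω | ENNReal.ofReal (Real.exp (κ * y)) < η ω (box ×ˢ Set.Ici (-y))}
        ≤ ENNReal.ofReal (C * Real.exp (-y * (κ - 2))))
    (hCox : ∀ y : ℝ, 0 < y → ∀ k : ℕ,
      P {ω | η ω (box ×ˢ Set.Ici (-y)) = k}
        = ∫⁻ ω, (if Y ω box = ⊤ then 0 else
            ENNReal.ofReal (Real.exp (-(β / 2 * Real.exp (2 * y) * (Y ω box).toReal))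
              * (β / 2 * Real.exp (2 * y) * (Y ω box).toReal) ^ k / (Nat.factorial k))) ∂P) :
    ∀ᵐ ω ∂P, Y ω box < ⊤ := by
  rw [ae_iff]
  set A : Set Ω := {ω | ¬ Y ω box < ⊤} with hA
  have hAmem : ∀ ω, ω ∈ A ↔ Y ω box = ⊤ := by
    intro ω; simp [hA, lt_top_iff_ne_top]
  -- Step 1: for every y > 0, P A ≤ C e^{-y(κ-2)}
  have main : ∀ y : ℝ, 0 < y → P A ≤ ENNReal.ofReal (C * Real.exp (-y * (κ - 2))) := by
    intro y hy
    set S := box ×ˢ Set.Ici (-y) with hS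
    set g : ℕ → Ω → ℝ≥0∞ := fun k ω => if Y ω box = ⊤ then 0 else
      ENNReal.ofReal (Real.exp (-(β / 2 * Real.exp (2 * y) * (Y ω box).toReal))
        * (β / 2 * Real.exp (2 * y) * (Y ω box).toReal) ^ k / (Nat.factorial k)) with hg
    set h : Ω → ℝ≥0∞ := fun ω => if Y ω box = ⊤ then 0 else 1 with hh
    -- the conditional Poisson weights sum to one
    have hsum : ∀ ω, ∑' k, g k ω = h ω := by
      intro ω
      by_cases hY : Y ω box = ⊤
      · simp [hg, hh, hY]
      · simp only [hg, hh, if_neg hY]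
        set lam : ℝ := β / 2 * Real.exp (2 * y) * (Y ω box).toReal with hlam
        have hlam0 : 0 ≤ lam := by positivity
        have hps : HasSum (fun k : ℕ => Real.exp (-lam) * lam ^ k / (Nat.factorial k)) 1 := by
          have := poissonPMFRealSum lam.toNNReal
          simpa [poissonPMFReal, Real.coe_toNNReal lam hlam0] using this
        rw [← ENNReal.ofReal_one, ← hps.tsum_eq,
          ENNReal.ofReal_tsum_of_nonneg (fun k => by positivity) hps.summable]
    have h1 : ∀ ω, h ω ≤ 1 := by
      intro ω; by_cases hY : Y ω box = ⊤ <;> simp [hh, hY]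
    have h0 : ∀ ω ∈ A, h ω = 0 := by
      intro ω hω; simp [hh, (hAmem ω).1 hω]
    have hkey : ∫⁻ ω, h ω ∂P + P A ≤ 1 := aux_lintegral_add_meas_le P h A h1 h0
    -- decomposition of the whole space by the value of η ω S
    have hdecomp : (1:ℝ≥0∞) ≤ P {ω | η ω S = ⊤} + ∑' k : ℕ, P {ω | η ω S = (k:ℝ≥0∞)} := by
      have hcover : (Set.univ : Set Ω) ⊆
          {ω | η ω S = ⊤} ∪ ⋃ k : ℕ, {ω | η ω S = (k:ℝ≥0∞)} := by
        intro ω _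
        rcases hpoint ω S with h' | ⟨k, h'⟩
        · exact Or.inl h'
        · exact Or.inr (Set.mem_iUnion.mpr ⟨k, h'⟩)
      calc (1:ℝ≥0∞) = P Set.univ := measure_univ.symm
        _ ≤ P ({ω | η ω S = ⊤} ∪ ⋃ k : ℕ, {ω | η ω S = (k:ℝ≥0∞)}) := measure_mono hcover
        _ ≤ P {ω | η ω S = ⊤} + P (⋃ k : ℕ, {ω | η ω S = (k:ℝ≥0∞)}) := measure_union_le _ _
        _ ≤ P {ω | η ω S = ⊤} + ∑' k : ℕ, P {ω | η ω S = (k:ℝ≥0∞)} :=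
            add_le_add_right (measure_iUnion_le _) _
    have hsums : ∑' k : ℕ, P {ω | η ω S = (k:ℝ≥0∞)} ≤ ∫⁻ ω, h ω ∂P := by
      calc ∑' k : ℕ, P {ω | η ω S = (k:ℝ≥0∞)} = ∑' k : ℕ, ∫⁻ ω, g k ω ∂P :=
            tsum_congr fun k => hCox y hy k
        _ ≤ ∫⁻ ω, ∑' k, g k ω ∂P := aux_tsum_lintegral_le P g
        _ = ∫⁻ ω, h ω ∂P := lintegral_congr hsum
    -- conclude P A ≤ P {η ω S = ⊤}
    have hPA : P A ≤ P {ω | η ω S = ⊤} := by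
      have c1 : P A + 1 ≤ P {ω | η ω S = ⊤} + 1 := by
        calc P A + 1 ≤ P A + (P {ω | η ω S = ⊤} + ∑' k : ℕ, P {ω | η ω S = (k:ℝ≥0∞)}) :=
              add_le_add_right hdecomp _
          _ ≤ P A + (P {ω | η ω S = ⊤} + ∫⁻ ω, h ω ∂P) :=
              add_le_add_right (add_le_add_right hsums _) _
          _ = P {ω | η ω S = ⊤} + (∫⁻ ω, h ω ∂P + P A) := by ring
          _ ≤ P {ω | η ω S = ⊤} + 1 := add_le_add_right hkey _
      exact (ENNReal.add_le_add_iff_right ENNReal.one_ne_top).mp c1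
    have hEsub : {ω | η ω S = ⊤} ⊆ {ω | ENNReal.ofReal (Real.exp (κ * y)) < η ω S} := by
      intro ω hω
      simp only [Set.mem_setOf_eq] at *
      rw [hω]
      exact ENNReal.ofReal_lt_top
    exact hPA.trans ((measure_mono hEsub).trans (hlevel y hy))
  -- Step 2: let y → ∞
  have htendR : Filter.Tendsto (fun x : ℝ => C * Real.exp (-x * (κ - 2)))
      Filter.atTop (nhds 0) := by
    rw [← mul_zero C]
    refine Filter.Tendsto.const_mul C ?_
    have hmul : Filter.Tendsto (fun x : ℝ => x * (κ - 2)) Filter.atTop Filter.atTop :=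
      Filter.Tendsto.atTop_mul_const (by linarith) Filter.tendsto_id
    have hneg : Filter.Tendsto (fun x : ℝ => -x * (κ - 2)) Filter.atTop Filter.atBot := by
      simpa [Function.comp_def, neg_mul] using Filter.tendsto_neg_atTop_atBot.comp hmul
    simpa [Function.comp_def] using Real.tendsto_exp_atBot.comp hneg
  have h3 : Filter.Tendsto (fun n : ℕ => (n:ℝ) + 1) Filter.atTop Filter.atTop :=
    Filter.tendsto_atTop_add_const_right _ 1 tendsto_natCast_atTop_atTop
  have htend : Filter.Tendsto
      (fun n : ℕ => ENNReal.ofReal (C * Real.exp (-((n:ℝ) + 1) * (κ - 2))))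
      Filter.atTop (nhds 0) := by
    rw [← ENNReal.ofReal_zero]
    exact (ENNReal.tendsto_ofReal (htendR.comp h3))
  have hle : ∀ n : ℕ, P A ≤ ENNReal.ofReal (C * Real.exp (-((n:ℝ) + 1) * (κ - 2))) :=
    fun n => main ((n:ℝ) + 1) (by positivity)
  exact le_antisymm (ge_of_tendsto' htend hle) zero_le
end
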